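/- Let τ₁ = (1 2 ⋯ d) and τ₂ = (j₁ j₂ ⋯ j_d) be disjoint d-cycles in S_n, and let s₁, s₂ be permutations supported on the union of the supports of τ₁ and τ₂, each a product of pairwise disjoint transpositions, such that s₁τ₁s₁⁻¹ = s₂τ₁s₂⁻¹ = τ₂⁻¹. Then there exists an integer z such that τ₂^z s₁ τ₂^{-z} = s₂. -/
import Mathlib


open Equiv Equiv.Perm Finset

/-- The "non-trivial centralizer" `Cent₀(σ)`: permutations commuting with `σ`
whose support is contained in the support of `σ`. -/
def Cent0 {n : ℕ} (σ : Equiv.Perm (Fin n)) : Subgroup (Equiv.Perm (Fin n)) where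
  carrier := {π | Commute π σ ∧ π.support ⊆ σ.support}
  one_mem' := ⟨Commute.one_left σ, by simp⟩
  mul_mem' := by
    intro a b ha hb
    exact ⟨ha.1.mul_left hb.1, (Equiv.Perm.support_mul_le a b).trans (sup_le ha.2 hb.2)⟩
  inv_mem' := by
    intro a ha
    exact ⟨ha.1.inv_left, by rw [Equiv.Perm.support_inv]; exact ha.2⟩

/-- The product `∏_{i ∈ s} τᵢ^{zᵢ}` of powers of pairwise disjoint permutations. -/
def Kprod {n k : ℕ} (τ : Fin k → Equiv.Perm (Fin n))
    (hdisj : ∀ i j, i ≠ j → Equiv.Perm.Disjoint (τ i) (τ j))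
    (s : Finset (Fin k)) (z : Fin k → ℤ) : Equiv.Perm (Fin n) :=
  s.noncommProd (fun i => τ i ^ z i)
    (fun a _ b _ hab => Commute.zpow_zpow ((hdisj a b hab).commute) _ _)

/-- The subgroup `H_σ = { x ∈ S_{X_σ} : xσx⁻¹ = σ^z for some integer z }`, as a set. -/
def Hgrp {n : ℕ} (σ : Equiv.Perm (Fin n)) : Set (Equiv.Perm (Fin n)) :=
  {x | x.support ⊆ σ.support ∧ ∃ z : ℤ, x * σ * x⁻¹ = σ ^ z}


lemma cycle_commute_eq_zpow_on_support {n : ℕ} {σ c : Equiv.Perm (Fin n)} (hσ : σ.IsCycle)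
    (hc : c * σ = σ * c) : ∃ k : ℤ, ∀ x ∈ σ.support, c x = (σ ^ k) x := by
  obtain ⟨x, hx, -⟩ := id hσ
  have hmove : ∀ y : Fin n, σ y ≠ y → σ (c y) ≠ c y := by
    intro y hy h
    have : c (σ y) = c y := by
      rw [← Equiv.Perm.mul_apply, hc, Equiv.Perm.mul_apply, h]
    exact hy (c.injective this)
  obtain ⟨k, hk⟩ := hσ.sameCycle hx (hmove x hx)
  refine ⟨k, fun y hy => ?_⟩
  obtain ⟨m, hm⟩ := hσ.sameCycle hx (Equiv.Perm.mem_support.mp hy)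
  have hcm : c * σ ^ m = σ ^ m * c := Commute.zpow_right hc m
  calc c y = c ((σ ^ m) x) := by rw [hm]
    _ = (σ ^ m) (c x) := by rw [← Equiv.Perm.mul_apply, hcm, Equiv.Perm.mul_apply]
    _ = (σ ^ m) ((σ ^ k) x) := by rw [hk]
    _ = (σ ^ k) ((σ ^ m) x) := by
        rw [← Equiv.Perm.mul_apply, ← Equiv.Perm.mul_apply, ← zpow_add, ← zpow_add, add_comm]
    _ = (σ ^ k) y := by rw [hm]

lemma commute_maps_support {n : ℕ} {σ c : Equiv.Perm (Fin n)}
    (hc : c * σ = σ * c) {y : Fin n} (hy : y ∈ σ.support) : c y ∈ σ.support := by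
  rw [Equiv.Perm.mem_support] at hy ⊢
  intro h
  have : c (σ y) = c y := by
    rw [← Equiv.Perm.mul_apply, hc, Equiv.Perm.mul_apply, h]
  exact hy (c.injective this)

lemma eq_zpow_mul_zpow_aux {n : ℕ} {τ₁ τ₂ c : Equiv.Perm (Fin n)}
    (hd : _root_.Disjoint τ₁.support τ₂.support)
    (hcc₂ : c * τ₂ = τ₂ * c)
    (hcsupp : c.support ⊆ τ₁.support ∪ τ₂.support)
    {k l : ℤ} (hk : ∀ x ∈ τ₁.support, c x = (τ₁ ^ k) x)
    (hl : ∀ x ∈ τ₂.support, c x = (τ₂ ^ l) x) :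
    c = τ₁ ^ k * τ₂ ^ l := by
  refine Equiv.ext fun x => ?_
  rw [Equiv.Perm.mul_apply]
  by_cases h1 : x ∈ τ₁.support
  · have h2 : x ∉ τ₂.support := Finset.disjoint_left.mp hd h1
    rw [Equiv.Perm.notMem_support] at h2
    rw [Equiv.Perm.zpow_apply_eq_self_of_apply_eq_self h2, hk x h1]
  · by_cases h2 : x ∈ τ₂.support
    · have hcx : c x ∈ τ₂.support := commute_maps_support hcc₂ h2
      have hcx1 : τ₁ (c x) = c x := by
        rw [← Equiv.Perm.notMem_support]
        exact Finset.disjoint_right.mp hd hcx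
      rw [← hl x h2, Equiv.Perm.zpow_apply_eq_self_of_apply_eq_self hcx1]
    · have hx : c x = x := by
        rw [← Equiv.Perm.notMem_support]
        intro h
        rcases Finset.mem_union.mp (hcsupp h) with h | h
        exacts [h1 h, h2 h]
      rw [Equiv.Perm.notMem_support] at h1 h2
      rw [hx, Equiv.Perm.zpow_apply_eq_self_of_apply_eq_self h2,
        Equiv.Perm.zpow_apply_eq_self_of_apply_eq_self h1]

/-- Let `τ₁` and `τ₂` be disjoint `d`-cycles in `S_n`, and let
`s₁, s₂` be products of pairwise disjoint transpositions (i.e. involutions, possibly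
trivial) supported on the union of the supports of `τ₁` and `τ₂` such that
`s₁τ₁s₁⁻¹ = s₂τ₁s₂⁻¹ = τ₂⁻¹`.  Then `τ₂^z s₁ τ₂^{-z} = s₂` for some integer `z`. -/
theorem conj_by_power_of_cycle_two_cycles
    {n d : ℕ} (τ₁ τ₂ : Equiv.Perm (Fin n))
    (hτ₁ : τ₁.IsCycle) (hτ₂ : τ₂.IsCycle)
    (hl₁ : τ₁.support.card = d) (hl₂ : τ₂.support.card = d)
    (hdisj : Equiv.Perm.Disjoint τ₁ τ₂)
    (s₁ s₂ : Equiv.Perm (Fin n))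
    (hs₁supp : s₁.support ⊆ τ₁.support ∪ τ₂.support)
    (hs₂supp : s₂.support ⊆ τ₁.support ∪ τ₂.support)
    (hs₁inv : s₁ ^ 2 = 1) (hs₂inv : s₂ ^ 2 = 1)
    (hc₁ : s₁ * τ₁ * s₁⁻¹ = τ₂⁻¹) (hc₂ : s₂ * τ₁ * s₂⁻¹ = τ₂⁻¹) :
    ∃ z : ℤ, τ₂ ^ z * s₁ * (τ₂ ^ z)⁻¹ = s₂ := by
  have hs₁sq : s₁ * s₁ = 1 := by rw [← sq]; exact hs₁inv
  have hs₂sq : s₂ * s₂ = 1 := by rw [← sq]; exact hs₂inv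
  have hs₁i : s₁⁻¹ = s₁ := inv_eq_of_mul_eq_one_right hs₁sq
  have hs₂i : s₂⁻¹ = s₂ := inv_eq_of_mul_eq_one_right hs₂sq
  have hτ₂eq₁ : τ₂ = s₁ * τ₁⁻¹ * s₁⁻¹ := by
    rw [← inv_inv τ₂, ← hc₁]; group
  have hτ₂eq₂ : τ₂ = s₂ * τ₁⁻¹ * s₂⁻¹ := by
    rw [← inv_inv τ₂, ← hc₂]; group
  have h₁' : s₁ * τ₂ * s₁⁻¹ = τ₁⁻¹ := by
    rw [hτ₂eq₁, hs₁i]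
    calc s₁ * (s₁ * τ₁⁻¹ * s₁) * s₁ = (s₁ * s₁) * τ₁⁻¹ * (s₁ * s₁) := by group
      _ = τ₁⁻¹ := by rw [hs₁sq]; group
  have h₂' : s₂ * τ₂ * s₂⁻¹ = τ₁⁻¹ := by
    rw [hτ₂eq₂, hs₂i]
    calc s₂ * (s₂ * τ₁⁻¹ * s₂) * s₂ = (s₂ * s₂) * τ₁⁻¹ * (s₂ * s₂) := by group
      _ = τ₁⁻¹ := by rw [hs₂sq]; group
  have hcc₁ : (s₂⁻¹ * s₁) * τ₁ = τ₁ * (s₂⁻¹ * s₁) := by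
    have e1 : s₁ * τ₁ = τ₂⁻¹ * s₁ := by rw [← hc₁]; group
    have e2 : τ₁ * s₂⁻¹ = s₂⁻¹ * τ₂⁻¹ := by rw [← hc₂]; group
    calc (s₂⁻¹ * s₁) * τ₁ = s₂⁻¹ * (s₁ * τ₁) := by group
      _ = s₂⁻¹ * τ₂⁻¹ * s₁ := by rw [e1]; group
      _ = τ₁ * s₂⁻¹ * s₁ := by rw [e2]
      _ = τ₁ * (s₂⁻¹ * s₁) := by group
  have hcc₂ : (s₂⁻¹ * s₁) * τ₂ = τ₂ * (s₂⁻¹ * s₁) := by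
    have e1 : s₁ * τ₂ = τ₁⁻¹ * s₁ := by rw [← h₁']; group
    have e2 : τ₂ * s₂⁻¹ = s₂⁻¹ * τ₁⁻¹ := by rw [← h₂']; group
    calc (s₂⁻¹ * s₁) * τ₂ = s₂⁻¹ * (s₁ * τ₂) := by group
      _ = s₂⁻¹ * τ₁⁻¹ * s₁ := by rw [e1]; group
      _ = τ₂ * s₂⁻¹ * s₁ := by rw [e2]
      _ = τ₂ * (s₂⁻¹ * s₁) := by group
  have hcsupp : (s₂⁻¹ * s₁).support ⊆ τ₁.support ∪ τ₂.support := by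
    intro x hx
    have h := Equiv.Perm.support_mul_le s₂⁻¹ s₁ hx
    rw [Finset.sup_eq_union, Finset.mem_union, Equiv.Perm.support_inv] at h
    rcases h with h | h
    exacts [hs₂supp h, hs₁supp h]
  obtain ⟨k, hk⟩ := cycle_commute_eq_zpow_on_support hτ₁ hcc₁
  obtain ⟨l, hl⟩ := cycle_commute_eq_zpow_on_support hτ₂ hcc₂
  have hdsupp : _root_.Disjoint τ₁.support τ₂.support :=
    Equiv.Perm.disjoint_iff_disjoint_support.mp hdisj
  have hceq : s₂⁻¹ * s₁ = τ₁ ^ k * τ₂ ^ l :=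
    eq_zpow_mul_zpow_aux hdsupp hcc₂ hcsupp hk hl
  have hs₁eq : s₁ = s₂ * (τ₁ ^ k * τ₂ ^ l) := by
    rw [← hceq]; group
  have hck : s₂ * τ₁ ^ k * s₂⁻¹ = τ₂ ^ (-k) := by
    rw [← conj_zpow, hc₂, inv_zpow, zpow_neg]
  have hcl : s₂ * τ₂ ^ l * s₂⁻¹ = τ₁ ^ (-l) := by
    rw [← conj_zpow, h₂', inv_zpow, zpow_neg]
  have hcomm : ∀ (a b : ℤ), τ₁ ^ a * τ₂ ^ b = τ₂ ^ b * τ₁ ^ a := fun a b =>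
    Commute.zpow_zpow hdisj.commute a b
  have hkey : τ₁ ^ (k - l) * τ₂ ^ (l - k) = 1 := by
    have e : s₂ * (τ₁ ^ k * τ₂ ^ l) * s₂⁻¹ = τ₂ ^ (-k) * τ₁ ^ (-l) := by
      calc s₂ * (τ₁ ^ k * τ₂ ^ l) * s₂⁻¹
          = (s₂ * τ₁ ^ k * s₂⁻¹) * (s₂ * τ₂ ^ l * s₂⁻¹) := by group
        _ = τ₂ ^ (-k) * τ₁ ^ (-l) := by rw [hck, hcl]
    have h1 : (1 : Equiv.Perm (Fin n))
        = (s₂ * (τ₁ ^ k * τ₂ ^ l) * s₂⁻¹) * (τ₁ ^ k * τ₂ ^ l) := by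
      rw [← hs₁sq, hs₁eq, hs₂i]; group
    calc τ₁ ^ (k - l) * τ₂ ^ (l - k)
        = τ₂ ^ (-k) * τ₁ ^ (k - l) * τ₂ ^ l := by
          rw [← (hcomm (k - l) (-k)), mul_assoc, ← zpow_add,
            show -k + l = l - k from by ring]
      _ = τ₂ ^ (-k) * (τ₁ ^ (-l) * τ₁ ^ k) * τ₂ ^ l := by
          rw [← zpow_add, show -l + k = k - l from by ring]
      _ = (s₂ * (τ₁ ^ k * τ₂ ^ l) * s₂⁻¹) * (τ₁ ^ k * τ₂ ^ l) := by rw [e]; group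
      _ = 1 := h1.symm
  have hτ₂lk : τ₂ ^ (l - k) = 1 :=
    ((hdisj.zpow_disjoint_zpow (k - l) (l - k)).mul_eq_one_iff.mp hkey).2
  have hτ₂l : τ₂ ^ l = τ₂ ^ k := by
    have h : τ₂ ^ l * (τ₂ ^ k)⁻¹ = 1 := by
      rw [← zpow_neg, ← zpow_add, show l + -k = l - k from by ring, hτ₂lk]
    calc τ₂ ^ l = τ₂ ^ l * (τ₂ ^ k)⁻¹ * τ₂ ^ k := by group
      _ = τ₂ ^ k := by rw [h, one_mul]
  refine ⟨k, ?_⟩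
  have hfin : τ₂ ^ k * s₂ = s₂ * τ₁ ^ (-k) := by
    calc τ₂ ^ k * s₂ = (τ₂ ^ (-k))⁻¹ * s₂ := by rw [zpow_neg, inv_inv]
      _ = (s₂ * τ₁ ^ k * s₂⁻¹)⁻¹ * s₂ := by rw [hck]
      _ = s₂ * τ₁ ^ (-k) := by rw [zpow_neg]; group
  calc τ₂ ^ k * s₁ * (τ₂ ^ k)⁻¹ = τ₂ ^ k * (s₂ * (τ₁ ^ k * τ₂ ^ l)) * (τ₂ ^ k)⁻¹ := by
        rw [← hs₁eq]
    _ = (τ₂ ^ k * s₂) * τ₁ ^ k * (τ₂ ^ l * (τ₂ ^ k)⁻¹) := by group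
    _ = (τ₂ ^ k * s₂) * τ₁ ^ k * 1 := by
        rw [hτ₂l, mul_inv_cancel]
    _ = s₂ * (τ₁ ^ (-k) * τ₁ ^ k) := by rw [hfin]; group
    _ = s₂ := by rw [← zpow_add, neg_add_cancel, zpow_zero, mul_one]
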